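/- Let X and Y be Banach spaces such that X has property (R_p) and Y has property (R_q) for some 1 < p, q < ∞ with 1/p + 1/q ≥ 1. Then the pair (X, Y) has property (AW): whenever W1 ⊆ X and W2 ⊆ Y are sets such that {x ⊗ y : x ∈ W1, y ∈ W2} is weakly precompact in X ⊗̂π Y, either W1 or W2 is relatively norm compact. -/

import Mathlib

open Filter Topology NormedSpace
open scoped ENNReal NNReal

/-- `Z`, together with the continuous bilinear map `m`, is (a realization of) the projective
tensor product `X ⊗̂π Y`: the span of elementary tensors is dense, and every continuous bilinear
map into a Banach space lifts to a continuous linear map on `Z` with the same norm. -/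
structure IsProjTensorProduct (X Y Z : Type*) [NormedAddCommGroup X] [NormedSpace ℝ X]
    [NormedAddCommGroup Y] [NormedSpace ℝ Y] [NormedAddCommGroup Z] [NormedSpace ℝ Z]
    (m : X →L[ℝ] Y →L[ℝ] Z) : Prop where
  dense_span : Dense (Submodule.span ℝ {z : Z | ∃ x y, m x y = z} : Set Z)
  lift : ∀ (W : Type) [NormedAddCommGroup W] [NormedSpace ℝ W] [CompleteSpace W]
    (B : X →L[ℝ] Y →L[ℝ] W), ∃ T : Z →L[ℝ] W, ‖T‖ = ‖B‖ ∧ ∀ x y, T (m x y) = B x y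

/-- A set is relatively weakly compact if its closure in the weak topology is weakly compact. -/
def RelWeakCompact (X : Type*) [SeminormedAddCommGroup X] [NormedSpace ℝ X] (A : Set X) : Prop :=
  IsCompact (closure ((toWeakSpace ℝ X) '' A))

/-- A set is relatively norm compact if its norm closure is compact. -/
def RelNormCompact (X : Type*) [SeminormedAddCommGroup X] [NormedSpace ℝ X] (A : Set X) : Prop :=
  IsCompact (closure A)

/-- A sequence is weakly Cauchy if every continuous functional sends it to a convergent sequence. -/
def WeaklyCauchySeq {X : Type*} [SeminormedAddCommGroup X] [NormedSpace ℝ X] (x : ℕ → X) : Prop :=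
  ∀ f : X →L[ℝ] ℝ, ∃ l : ℝ, Tendsto (fun n => f (x n)) atTop (nhds l)

/-- A sequence is weakly null if it converges to `0` in the weak topology. -/
def WeaklyNullSeq {X : Type*} [SeminormedAddCommGroup X] [NormedSpace ℝ X] (x : ℕ → X) : Prop :=
  ∀ f : X →L[ℝ] ℝ, Tendsto (fun n => f (x n)) atTop (nhds 0)

/-- A set is weakly precompact if every sequence in it has a weakly Cauchy subsequence. -/
def WeaklyPrecompact {X : Type*} [SeminormedAddCommGroup X] [NormedSpace ℝ X] (A : Set X) : Prop :=
  ∀ x : ℕ → X, (∀ n, x n ∈ A) → ∃ φ : ℕ → ℕ, StrictMono φ ∧ WeaklyCauchySeq (x ∘ φ)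

/-- A (weakly) compact operator maps the closed unit ball to a relatively (weakly) compact set. -/
def WeaklyCompactOp {X Y : Type*} [SeminormedAddCommGroup X] [NormedSpace ℝ X]
    [SeminormedAddCommGroup Y] [NormedSpace ℝ Y] (T : X →L[ℝ] Y) : Prop :=
  RelWeakCompact Y (T '' Metric.closedBall 0 1)

/-- A sequence is seminormalized if `0 < inf ‖xₙ‖ ≤ sup ‖xₙ‖ < ∞`. -/
def Seminormalized {X : Type*} [NormedAddCommGroup X] (x : ℕ → X) : Prop :=
  ∃ a b : ℝ, 0 < a ∧ ∀ n, a ≤ ‖x n‖ ∧ ‖x n‖ ≤ b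

/-- A sequence `z` in `X` is (a basic sequence) equivalent to the unit vector basis of `ℓp`. -/
def EquivLpBasis (p : ℝ≥0∞) [Fact (1 ≤ p)] {X : Type*} [NormedAddCommGroup X]
    [NormedSpace ℝ X] (z : ℕ → X) : Prop :=
  ∃ C C' : ℝ, 0 < C ∧ 0 < C' ∧ ∀ (s : Finset ℕ) (a : ℕ → ℝ),
    C * ‖∑ n ∈ s, a n • (lp.single p n (1 : ℝ) : lp (fun _ : ℕ => ℝ) p)‖ ≤
        ‖∑ n ∈ s, a n • z n‖ ∧
      ‖∑ n ∈ s, a n • z n‖ ≤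
        C' * ‖∑ n ∈ s, a n • (lp.single p n (1 : ℝ) : lp (fun _ : ℕ => ℝ) p)‖

/-- The closed linear span of the sequence `z` is complemented in `X`. -/
def SpanComplemented {X : Type*} [NormedAddCommGroup X] [NormedSpace ℝ X] (z : ℕ → X) : Prop :=
  ∃ P : X →L[ℝ] X, P.comp P = P ∧
    LinearMap.range P.toLinearMap = (Submodule.span ℝ (Set.range z)).topologicalClosure

/-- Property `(P_p)`: every seminormalized weakly null sequence admits a subsequence which is a
basic sequence equivalent to the unit vector basis of `ℓp` with complemented closed linear span. -/
def PropP (p : ℝ≥0∞) [Fact (1 ≤ p)] (X : Type*) [NormedAddCommGroup X]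
    [NormedSpace ℝ X] : Prop :=
  ∀ x : ℕ → X, Seminormalized x → WeaklyNullSeq x →
    ∃ φ : ℕ → ℕ, StrictMono φ ∧ EquivLpBasis p (x ∘ φ) ∧ SpanComplemented (x ∘ φ)

/-- Property `(R_p)`: for every relatively weakly compact set `A` which is not relatively norm
compact there is an operator `u : X → ℓp` with `u(A)` not relatively norm compact. -/
def PropR (p : ℝ≥0∞) [Fact (1 ≤ p)] (X : Type*) [NormedAddCommGroup X]
    [NormedSpace ℝ X] : Prop :=
  ∀ A : Set X, RelWeakCompact X A → ¬ RelNormCompact X A →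
    ∃ u : X →L[ℝ] lp (fun _ : ℕ => ℝ) p, ¬ RelNormCompact _ (u '' A)


lemma aux_sign_mul_self (r : ℝ) : Real.sign r * r = |r| := by
  rcases lt_trichotomy r 0 with h|h|h
  · rw [Real.sign_of_neg h, abs_of_neg h]; ring
  · simp [h]
  · rw [Real.sign_of_pos h, abs_of_pos h]; ring

lemma aux_abs_sign_le_one (r : ℝ) : |Real.sign r| ≤ 1 := by
  rcases lt_trichotomy r 0 with h|h|h
  · rw [Real.sign_of_neg h]; simp
  · simp [h]
  · rw [Real.sign_of_pos h]; simp

lemma aux_abs_rpow_mul_abs_sign (x : ℝ) (e : ℝ) (he : 0 < e) :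
    |x| ^ e * |Real.sign x| = |x| ^ e := by
  rcases eq_or_ne x 0 with h|h
  · simp [h, Real.zero_rpow he.ne']
  · rcases lt_trichotomy x 0 with h'|h'|h'
    · rw [Real.sign_of_neg h']; simp
    · exact absurd h' h
    · rw [Real.sign_of_pos h']; simp

/-- Power-sum comparison: for `0 < r1 ≤ r2`, `∑ d^r2 ≤ (∑ d^r1)^(r2/r1)`. -/
lemma aux_sum_rpow_le {s : Finset ℕ} {d : ℕ → ℝ} (hd : ∀ j, 0 ≤ d j)
    {r1 r2 : ℝ} (h1 : 0 < r1) (hr : r1 ≤ r2) :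
    ∑ j ∈ s, d j ^ r2 ≤ (∑ j ∈ s, d j ^ r1) ^ (r2 / r1) := by
  have h2 : 0 < r2 := h1.trans_le hr
  set S := ∑ j ∈ s, d j ^ r1 with hS
  have hS0 : 0 ≤ S := Finset.sum_nonneg fun j _ => Real.rpow_nonneg (hd j) _
  have hdS : ∀ j ∈ s, d j ≤ S ^ (1/r1) := by
    intro j hj
    have h1' : d j ^ r1 ≤ S := Finset.single_le_sum
      (fun i _ => Real.rpow_nonneg (hd i) _) hj
    have := Real.rpow_le_rpow (Real.rpow_nonneg (hd j) _) h1' (by positivity : (0:ℝ) ≤ 1/r1)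
    rwa [← Real.rpow_mul (hd j), mul_one_div, div_self h1.ne', Real.rpow_one] at this
  have key : ∀ j ∈ s, d j ^ r2 ≤ d j ^ r1 * S ^ ((r2 - r1)/r1) := by
    intro j hj
    have e1 : d j ^ r2 = d j ^ r1 * d j ^ (r2 - r1) := by
      rw [← Real.rpow_add' (hd j) (by simp [h2.ne'])]
      congr 1; ring
    rw [e1]
    refine mul_le_mul_of_nonneg_left ?_ (Real.rpow_nonneg (hd j) _)
    calc d j ^ (r2 - r1) ≤ (S ^ (1/r1)) ^ (r2 - r1) :=
          Real.rpow_le_rpow (hd j) (hdS j hj) (by linarith)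
      _ = S ^ ((r2 - r1)/r1) := by
          rw [← Real.rpow_mul hS0]; ring_nf
  calc ∑ j ∈ s, d j ^ r2 ≤ ∑ j ∈ s, d j ^ r1 * S ^ ((r2 - r1)/r1) :=
        Finset.sum_le_sum key
    _ = S * S ^ ((r2 - r1)/r1) := by rw [← Finset.sum_mul]
    _ ≤ S ^ (r2/r1) := by
        rcases eq_or_lt_of_le hS0 with h|h
        · rw [← h, Real.zero_rpow (by positivity : r2/r1 ≠ 0), zero_mul]
        · apply le_of_eq
          have : r2/r1 = 1 + (r2 - r1)/r1 := by field_simp; ring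
          rw [this, Real.rpow_add h, Real.rpow_one]


/-- Generalized Hölder for `1 ≤ 1/pr + 1/qr`. -/
lemma aux_holder {pr qr : ℝ} (hpr : 1 < pr) (hqr : 1 < qr)
    (hpq : 1 ≤ 1/pr + 1/qr) {a d : ℕ → ℝ} (ha : ∀ j, 0 ≤ a j) (hd : ∀ j, 0 ≤ d j)
    (s : Finset ℕ) :
    ∑ j ∈ s, a j * d j ≤ (∑ j ∈ s, a j ^ pr) ^ (1/pr) * (∑ j ∈ s, d j ^ qr) ^ (1/qr) := by
  have hconj : pr.HolderConjugate pr.conjExponent := Real.HolderConjugate.conjExponent hpr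
  set pr' := pr.conjExponent with hpr'
  have hpr'pos : 0 < pr' := hconj.symm.pos
  have hqr0 : 0 < qr := by linarith
  have hqle : qr ≤ pr' := by
    have h1 : 1/pr' = 1 - 1/pr := by
      have := hconj.inv_add_inv_eq_one
      rw [one_div, one_div]; linarith
    have h2 : 1/pr' ≤ 1/qr := by rw [h1]; linarith
    rwa [div_le_div_iff₀ hpr'pos hqr0, one_mul, one_mul] at h2
  have hstep1 : ∑ j ∈ s, a j * d j ≤
      (∑ j ∈ s, a j ^ pr) ^ (1/pr) * (∑ j ∈ s, d j ^ pr') ^ (1/pr') :=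
    Real.inner_le_Lp_mul_Lq_of_nonneg s hconj (fun i _ => ha i) (fun i _ => hd i)
  refine hstep1.trans (mul_le_mul_of_nonneg_left ?_ (Real.rpow_nonneg
    (Finset.sum_nonneg fun j _ => Real.rpow_nonneg (ha j) _) _))
  have hd2 : ∑ j ∈ s, d j ^ pr' ≤ (∑ j ∈ s, d j ^ qr) ^ (pr'/qr) :=
    aux_sum_rpow_le hd hqr0 hqle
  calc (∑ j ∈ s, d j ^ pr') ^ (1/pr')
      ≤ ((∑ j ∈ s, d j ^ qr) ^ (pr'/qr)) ^ (1/pr') :=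
        Real.rpow_le_rpow (Finset.sum_nonneg fun j _ => Real.rpow_nonneg (hd j) _)
          hd2 (by positivity)
    _ = (∑ j ∈ s, d j ^ qr) ^ (1/qr) := by
        rw [← Real.rpow_mul (Finset.sum_nonneg fun j _ => Real.rpow_nonneg (hd j) _)]
        congr 1
        field_simp

/-- Hölder-type bound with given majorants. -/
lemma aux_holder_bound {pr qr : ℝ} (hpr : 1 < pr) (hqr : 1 < qr)
    (hpq : 1 ≤ 1/pr + 1/qr) (a d : ℕ → ℝ) (s : Finset ℕ) {A B : ℝ}
    (hA : 0 ≤ A) (hB : 0 ≤ B)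
    (ha : ∑ j ∈ s, |a j| ^ pr ≤ A) (hd : ∑ j ∈ s, |d j| ^ qr ≤ B) :
    ∑ j ∈ s, |a j| * |d j| ≤ A ^ (1/pr) * B ^ (1/qr) := by
  refine (aux_holder hpr hqr hpq (fun j => abs_nonneg (a j)) (fun j => abs_nonneg (d j)) s).trans ?_
  have h1 : (0:ℝ) ≤ ∑ j ∈ s, |a j| ^ pr := Finset.sum_nonneg fun j _ => Real.rpow_nonneg (abs_nonneg _) _
  have h2 : (0:ℝ) ≤ ∑ j ∈ s, |d j| ^ qr := Finset.sum_nonneg fun j _ => Real.rpow_nonneg (abs_nonneg _) _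
  exact mul_le_mul (Real.rpow_le_rpow h1 ha (by positivity))
    (Real.rpow_le_rpow h2 hd (by positivity)) (Real.rpow_nonneg h2 _) (Real.rpow_nonneg hA _)

/-- From a non relatively-norm-compact set, extract a uniformly separated sequence. -/
lemma aux_exists_sep_seq {E : Type*} [NormedAddCommGroup E] [NormedSpace ℝ E]
    [CompleteSpace E] {A : Set E} (hA : ¬ IsCompact (closure A)) :
    ∃ ε : ℝ, 0 < ε ∧ ∃ f : ℕ → E, (∀ n, f n ∈ A) ∧
      ∀ m n, m ≠ n → ε ≤ dist (f m) (f n) := by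
  have hTB : ¬ TotallyBounded A := by
    intro hTB
    exact hA (isCompact_iff_totallyBounded_isComplete.mpr
      ⟨hTB.closure, isClosed_closure.isComplete⟩)
  rw [Metric.totallyBounded_iff] at hTB
  push_neg at hTB
  obtain ⟨ε, hε, hsep⟩ := hTB
  refine ⟨ε, hε, ?_⟩
  have key : ∀ t : Finset E, ∃ x, x ∈ A ∧ ∀ y ∈ t, ε ≤ dist x y := by
    intro t
    by_contra hc
    push_neg at hc
    refine (hsep (t : Set E) t.finite_toSet) ?_
    intro x hx
    obtain ⟨y, hy, hxy⟩ := hc x hx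
    exact Set.mem_biUnion hy hxy
  classical
  choose g hgA hgd using key
  let F : ℕ → Finset E := fun n => Nat.rec ∅ (fun _ t => insert (g t) t) n
  have hFmono : Monotone F := monotone_nat_of_le_succ (fun n => Finset.subset_insert _ _)
  refine ⟨fun n => g (F n), fun n => hgA _, ?_⟩
  have main : ∀ m n, m < n → ε ≤ dist (g (F n)) (g (F m)) := by
    intro m n hmn
    have hmem : g (F m) ∈ F n := by
      have : g (F m) ∈ F (m+1) := Finset.mem_insert_self _ _
      exact hFmono hmn this
    exact hgd (F n) (g (F m)) hmem
  intro m n hmn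
  rcases lt_or_gt_of_ne hmn with h|h
  · rw [dist_comm]; exact main m n h
  · exact main n m h

/-- An injective sequence of naturals admits a subsequence along which it is strictly
monotone. -/
lemma aux_exists_strictMono_comp {j : ℕ → ℕ} (hj : Function.Injective j) :
    ∃ σ : ℕ → ℕ, StrictMono σ ∧ StrictMono (fun n => j (σ n)) := by
  have hT : Tendsto j atTop atTop := hj.nat_tendsto_atTop
  have key : ∀ a : ℕ, ∃ b, a < b ∧ j a < j b := by
    intro a
    obtain ⟨m, hm⟩ := (tendsto_atTop.mp hT (j a + 1)).exists_forall_of_atTop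
    refine ⟨max m (a+1), ?_, ?_⟩
    · exact lt_of_lt_of_le (Nat.lt_succ_self a) (le_max_right _ _)
    · have := hm (max m (a+1)) (le_max_left _ _)
      omega
  choose nx h1 h2 using key
  refine ⟨fun n => Nat.rec 0 (fun _ prev => nx prev) n, ?_, ?_⟩
  · exact strictMono_nat_of_lt_succ (fun n => h1 _)
  · exact strictMono_nat_of_lt_succ (fun n => h2 _)


section Part3

variable {X : Type*} [NormedAddCommGroup X] [NormedSpace ℝ X]

lemma aux_weaklyCauchy_bounded (x : ℕ → X) (hx : WeaklyCauchySeq x) :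
    ∃ C : ℝ, ∀ n, ‖x n‖ ≤ C := by
  have hpt : ∀ f : X →L[ℝ] ℝ, ∃ C, ∀ n, ‖(inclusionInDoubleDual ℝ X (x n)) f‖ ≤ C := by
    intro f
    obtain ⟨l, hl⟩ := hx f
    obtain ⟨R, -, hR⟩ := cauchySeq_bdd hl.cauchySeq
    refine ⟨R + ‖f (x 0)‖, fun n => ?_⟩
    have h1 := hR n 0
    have h2 : ‖f (x n) - f (x 0)‖ ≤ R := by
      calc ‖f (x n) - f (x 0)‖ = dist (f (x n)) (f (x 0)) := (dist_eq_norm _ _).symm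
        _ ≤ R := h1.le
    calc ‖(inclusionInDoubleDual ℝ X (x n)) f‖ = ‖f (x n)‖ := rfl
      _ = ‖(f (x n) - f (x 0)) + f (x 0)‖ := by rw [sub_add_cancel]
      _ ≤ ‖f (x n) - f (x 0)‖ + ‖f (x 0)‖ := norm_add_le _ _
      _ ≤ R + ‖f (x 0)‖ := by linarith
  obtain ⟨C, hC⟩ := banach_steinhaus hpt
  refine ⟨C, fun n => ?_⟩
  have := hC n
  rwa [show (inclusionInDoubleDual ℝ X (x n) : StrongDual ℝ (StrongDual ℝ X)) =
    inclusionInDoubleDualLi ℝ (E := X) (x n) from rfl,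
    (inclusionInDoubleDualLi ℝ (E := X)).norm_map] at this

lemma aux_flip_injective : Function.Injective ⇑(topDualPairing ℝ X).flip := by
  intro a b hab
  by_contra hne
  have hsub : a - b ≠ 0 := sub_ne_zero.mpr hne
  obtain ⟨g, hg1, hg2⟩ := exists_dual_vector ℝ (a - b) (norm_ne_zero_iff.mpr hsub)
  have heq : g a = g b := LinearMap.congr_fun hab g
  rw [map_sub] at hg2
  have hg2' : g a - g b = ‖a - b‖ := by exact_mod_cast hg2
  have : ‖a - b‖ = 0 := by rw [← hg2', heq]; ring
  exact hsub (norm_eq_zero.mp this)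

instance aux_t2_weakspace : T2Space (WeakSpace ℝ X) :=
  (WeakBilin.isEmbedding (B := (topDualPairing ℝ X).flip) aux_flip_injective).t2Space

lemma aux_tendsto_weak {z : ℕ → X} (hz : WeaklyNullSeq z) :
    Tendsto (fun n => toWeakSpace ℝ X (z n)) atTop (𝓝 (toWeakSpace ℝ X 0)) := by
  refine (WeakBilin.tendsto_iff_forall_eval_tendsto (B := (topDualPairing ℝ X).flip)
    (f := fun n => toWeakSpace ℝ X (z n)) (x := toWeakSpace ℝ X 0) aux_flip_injective).mpr ?_
  intro f
  have := hz f
  convert this using 2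
  · rfl
  · exact (map_zero f : f 0 = 0)

lemma aux_relWeakCompact_range {z : ℕ → X} (hz : WeaklyNullSeq z) :
    RelWeakCompact X (Set.range z) := by
  have hK : IsCompact (insert (toWeakSpace ℝ X 0)
      (Set.range fun n => toWeakSpace ℝ X (z n))) :=
    (aux_tendsto_weak hz).isCompact_insert_range
  have himg : (toWeakSpace ℝ X) '' (Set.range z) =
      Set.range (fun n => toWeakSpace ℝ X (z n)) := by
    rw [← Set.range_comp]; rfl
  refine hK.of_isClosed_subset isClosed_closure (closure_minimal ?_ hK.isClosed)
  rw [himg]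
  exact Set.subset_insert _ _

lemma aux_not_relNormCompact_range {z : ℕ → X} (hz : WeaklyNullSeq z) {ε : ℝ}
    (hε : 0 < ε) (hlb : ∀ n, ε ≤ ‖z n‖) : ¬ RelNormCompact X (Set.range z) := by
  intro hc
  obtain ⟨l, -, φ, hφ, hconv⟩ := hc.tendsto_subseq
    (x := z) (fun n => subset_closure (Set.mem_range_self n))
  have hl0 : l = 0 := by
    by_contra hl
    obtain ⟨g, hg1, hg2⟩ := exists_dual_vector ℝ l (norm_ne_zero_iff.mpr hl)
    have h1 : Tendsto (fun n => g (z (φ n))) atTop (𝓝 (g l)) :=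
      (g.continuous.tendsto l).comp hconv
    have h2 : Tendsto (fun n => g (z (φ n))) atTop (𝓝 0) :=
      (hz g).comp hφ.tendsto_atTop
    have hgl : g l = 0 := tendsto_nhds_unique h1 h2
    have hg2' : g l = ‖l‖ := by exact_mod_cast hg2
    rw [hgl] at hg2'
    exact hl (norm_eq_zero.mp hg2'.symm)
  have hnorm : Tendsto (fun n => ‖z (φ n)‖) atTop (𝓝 ‖l‖) := hconv.norm
  rw [hl0, norm_zero] at hnorm
  have := (hnorm.eventually_lt_const hε).exists
  obtain ⟨n, hn⟩ := this
  exact absurd (hlb (φ n)) (not_le.mpr hn)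

end Part3

/-- Coordinate functional on `ℓp`. -/
noncomputable def lpCoord (p : ℝ≥0∞) [Fact (1 ≤ p)] (k : ℕ) :
    lp (fun _ : ℕ => ℝ) p →L[ℝ] ℝ :=
  LinearMap.mkContinuous
    { toFun := fun f => f k
      map_add' := fun f g => by
        show (↑(f + g) : ℕ → ℝ) k = (↑f : ℕ → ℝ) k + (↑g : ℕ → ℝ) k
        rw [lp.coeFn_add]; rfl
      map_smul' := fun c f => by
        show (↑(c • f) : ℕ → ℝ) k = c • (↑f : ℕ → ℝ) k
        rw [lp.coeFn_smul]; rfl }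
    1 (fun f => by
      have hp : p ≠ 0 := (zero_lt_one.trans_le (Fact.out : 1 ≤ p)).ne'
      simpa using lp.norm_apply_le_norm hp f k)

@[simp] lemma lpCoord_apply (p : ℝ≥0∞) [Fact (1 ≤ p)] (k : ℕ)
    (f : lp (fun _ : ℕ => ℝ) p) : lpCoord p k f = f k := rfl


/-- Gliding hump: extract a subsequence whose mass is concentrated on consecutive blocks. -/
lemma aux_glide_hump (p : ℝ≥0∞) [Fact (1 ≤ p)] (hpr : 0 < p.toReal)
    (ξ : ℕ → lp (fun _ : ℕ => ℝ) p)
    (hnull : ∀ k : ℕ, Tendsto (fun n => (ξ n : ℕ → ℝ) k) atTop (𝓝 0))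
    {ε : ℝ} (hε : 0 < ε) :
    ∃ ψ N : ℕ → ℕ, StrictMono ψ ∧ StrictMono N ∧
      ∀ j, ‖ξ (ψ j)‖ ^ p.toReal - ε ≤
        ∑ k ∈ Finset.Ico (N j) (N (j+1)), |(ξ (ψ j) : ℕ → ℝ) k| ^ p.toReal := by
  have step : ∀ n0 M0 : ℕ, ∃ nM : ℕ × ℕ, n0 < nM.1 ∧ M0 < nM.2 ∧
      ‖ξ nM.1‖ ^ p.toReal - ε ≤
        ∑ k ∈ Finset.Ico M0 nM.2, |(ξ nM.1 : ℕ → ℝ) k| ^ p.toReal := by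
    intro n0 M0
    have hterm : ∀ k : ℕ, Tendsto (fun n => |(ξ n : ℕ → ℝ) k| ^ p.toReal) atTop (𝓝 0) := by
      intro k
      have h1 : Tendsto (fun n => |(ξ n : ℕ → ℝ) k|) atTop (𝓝 0) := by
        simpa using (hnull k).abs
      have h2 := h1.rpow_const (p := p.toReal) (Or.inr hpr.le)
      simpa [Real.zero_rpow hpr.ne'] using h2
    have hhead : Tendsto (fun n => ∑ k ∈ Finset.range M0, |(ξ n : ℕ → ℝ) k| ^ p.toReal)
        atTop (𝓝 0) := by
      have := tendsto_finset_sum (Finset.range M0) (fun k _ => hterm k)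
      simpa using this
    obtain ⟨n, hn2, hn1⟩ :=
      ((hhead.eventually_lt_const (half_pos hε)).and (eventually_gt_atTop n0)).exists
    have hsum := (lp.hasSum_norm hpr (ξ n)).tendsto_sum_nat
    obtain ⟨M, hM2, hM1⟩ :=
      ((hsum.eventually_const_lt (by linarith : ‖ξ n‖ ^ p.toReal - ε/2 < ‖ξ n‖ ^ p.toReal)).and
        (eventually_gt_atTop M0)).exists
    refine ⟨(n, M), hn1, hM1, ?_⟩
    have e1 : ∀ (s : Finset ℕ), ∑ k ∈ s, ‖(ξ n : ℕ → ℝ) k‖ ^ p.toReal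
        = ∑ k ∈ s, |(ξ n : ℕ → ℝ) k| ^ p.toReal := by
      intro s; apply Finset.sum_congr rfl; intro k _; rw [Real.norm_eq_abs]
    have htele : ∑ k ∈ Finset.range M0, |(ξ n : ℕ → ℝ) k| ^ p.toReal +
        ∑ k ∈ Finset.Ico M0 M, |(ξ n : ℕ → ℝ) k| ^ p.toReal
        = ∑ k ∈ Finset.range M, |(ξ n : ℕ → ℝ) k| ^ p.toReal := by
      rw [← e1, ← e1, ← e1, Finset.range_eq_Ico, Finset.range_eq_Ico]
      exact Finset.sum_Ico_consecutive (fun k => ‖(ξ n : ℕ → ℝ) k‖ ^ p.toReal) (Nat.zero_le M0) hM1.le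
    rw [e1] at hM2
    simp only at hn2 hM2 ⊢
    linarith
  choose stepf hstep1 hstep2 hstep3 using step
  let G : ℕ → ℕ × ℕ := fun j => Nat.rec (stepf 0 0) (fun _ prev => stepf prev.1 prev.2) j
  refine ⟨fun j => (G j).1, fun j => Nat.rec 0 (fun i _ => (G i).2) j, ?_, ?_, ?_⟩
  · apply strictMono_nat_of_lt_succ
    intro n
    exact hstep1 (G n).1 (G n).2
  · apply strictMono_nat_of_lt_succ
    intro n
    cases n with
    | zero => exact hstep2 0 0
    | succ n => exact hstep2 (G n).1 (G n).2
  · intro j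
    cases j with
    | zero => exact hstep3 0 0
    | succ j => exact hstep3 (G j).1 (G j).2


/-- The block-functional package on one side. -/
lemma aux_side_package (p : ℝ≥0∞) [Fact (1 ≤ p)] (hp1 : 1 < p.toReal)
    (ξ : ℕ → lp (fun _ : ℕ => ℝ) p)
    (hnull : ∀ k : ℕ, Tendsto (fun n => (ξ n : ℕ → ℝ) k) atTop (𝓝 0))
    {δ ε : ℝ} (hδ : 0 < δ) (hlb : ∀ n, δ ≤ ‖ξ n‖)
    (hε : 0 < ε) (hεδ : ε ≤ δ ^ p.toReal / 2) :
    ∃ (ψ : ℕ → ℕ) (bs : ℕ → lp (fun _ : ℕ => ℝ) p → ℝ),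
      StrictMono ψ ∧
      (∀ j w w', bs j (w + w') = bs j w + bs j w') ∧
      (∀ j (c : ℝ) w, bs j (c • w) = c * bs j w) ∧
      (∀ j, (δ ^ p.toReal / 2) ^ (1 / p.toReal) ≤ bs j (ξ (ψ j))) ∧
      (∀ (w : lp (fun _ : ℕ => ℝ) p) (s : Finset ℕ),
        ∑ j ∈ s, |bs j w| ^ p.toReal ≤ ‖w‖ ^ p.toReal) ∧
      (∀ (i : ℕ) (s : Finset ℕ), i ∉ s →
        ∑ j ∈ s, |bs j (ξ (ψ i))| ^ p.toReal ≤ ε) := by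
  set pr := p.toReal with hprdef
  have hpr0 : 0 < pr := by linarith
  have hconj : pr.HolderConjugate pr.conjExponent := Real.HolderConjugate.conjExponent hp1
  set pr' := pr.conjExponent with hpr'def
  have hpr'0 : 0 < pr' := hconj.symm.pos
  obtain ⟨ψ, N, hψ, hN, hblock⟩ := aux_glide_hump p hpr0 ξ hnull hε
  set B : ℕ → Finset ℕ := fun j => Finset.Ico (N j) (N (j+1)) with hBdef
  set ξ' : ℕ → lp (fun _ : ℕ => ℝ) p := fun j => ξ (ψ j) with hξ'def
  set T : ℕ → ℝ := fun j => ∑ k ∈ B j, |(ξ' j : ℕ → ℝ) k| ^ pr with hTdef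
  have hTlb : ∀ j, δ ^ pr / 2 ≤ T j := by
    intro j
    have h1 : δ ^ pr ≤ ‖ξ' j‖ ^ pr := Real.rpow_le_rpow hδ.le (hlb (ψ j)) hpr0.le
    have h2 := hblock j
    simp only [hTdef, hBdef, hξ'def]
    linarith
  have hTpos : ∀ j, 0 < T j := fun j => lt_of_lt_of_le (by positivity) (hTlb j)
  set β := (pr - 1) / pr with hβdef
  have hβ0 : 0 ≤ β := by
    apply div_nonneg <;> linarith
  set t : ℕ → ℕ → ℝ :=
    fun j k => |(ξ' j : ℕ → ℝ) k| ^ (pr - 1) * Real.sign ((ξ' j : ℕ → ℝ) k) with htdef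
  set bs : ℕ → lp (fun _ : ℕ => ℝ) p → ℝ :=
    fun j w => (∑ k ∈ B j, t j k * (w : ℕ → ℝ) k) / T j ^ β with hbsdef
  have habs_t : ∀ j k, |t j k| = |(ξ' j : ℕ → ℝ) k| ^ (pr - 1) := by
    intro j k
    rw [htdef]
    simp only [abs_mul, abs_abs]
    rw [abs_of_nonneg (Real.rpow_nonneg (abs_nonneg _) _)]
    exact aux_abs_rpow_mul_abs_sign _ _ (by linarith)
  -- Hölder-type bound for the numerator
  have hnum : ∀ j (w : lp (fun _ : ℕ => ℝ) p),
      |∑ k ∈ B j, t j k * (w : ℕ → ℝ) k| ≤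
        T j ^ β * (∑ k ∈ B j, |(w : ℕ → ℝ) k| ^ pr) ^ (1 / pr) := by
    intro j w
    have h1 : |∑ k ∈ B j, t j k * (w : ℕ → ℝ) k| ≤
        ∑ k ∈ B j, |(ξ' j : ℕ → ℝ) k| ^ (pr - 1) * |(w : ℕ → ℝ) k| := by
      refine (Finset.abs_sum_le_sum_abs _ _).trans ?_
      apply Finset.sum_le_sum
      intro k _
      rw [abs_mul, habs_t]
    have h2 : ∑ k ∈ B j, |(ξ' j : ℕ → ℝ) k| ^ (pr - 1) * |(w : ℕ → ℝ) k| ≤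
        (∑ k ∈ B j, (|(ξ' j : ℕ → ℝ) k| ^ (pr - 1)) ^ pr') ^ (1 / pr') *
          (∑ k ∈ B j, |(w : ℕ → ℝ) k| ^ pr) ^ (1 / pr) := by
      refine Real.inner_le_Lp_mul_Lq_of_nonneg _ hconj.symm ?_ ?_
      · intro k _; positivity
      · intro k _; positivity
    have h3 : ∑ k ∈ B j, (|(ξ' j : ℕ → ℝ) k| ^ (pr - 1)) ^ pr' = T j := by
      rw [hTdef]
      apply Finset.sum_congr rfl
      intro k _
      rw [← Real.rpow_mul (abs_nonneg _), hconj.sub_one_mul_conj]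
    have h4 : (T j) ^ (1 / pr') = T j ^ β := by
      congr 1
      rw [hβdef, one_div, ← hconj.one_sub_inv]
      field_simp
    rw [h3, h4] at h2
    exact h1.trans h2
  have hTβpos : ∀ j, 0 < T j ^ β := fun j => Real.rpow_pos_of_pos (hTpos j) _
  have hblocks : ∀ (w : lp (fun _ : ℕ => ℝ) p) (s : Finset ℕ),
      ∑ j ∈ s, ∑ k ∈ B j, |(w : ℕ → ℝ) k| ^ pr ≤ ‖w‖ ^ pr := by
    intro w s
    have hsumm : Summable (fun k : ℕ => |(w : ℕ → ℝ) k| ^ pr) := by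
      refine ((lp.hasSum_norm hpr0 w).summable).congr ?_
      intro k; rw [Real.norm_eq_abs]
    have htsum : ∑' k, |(w : ℕ → ℝ) k| ^ pr = ‖w‖ ^ pr := by
      rw [← (lp.hasSum_norm hpr0 w).tsum_eq]
      exact tsum_congr (fun k => by rw [Real.norm_eq_abs])
    have hsub : s ⊆ Finset.range (s.sup id + 1) := by
      intro j hj
      rw [Finset.mem_range]
      exact Nat.lt_succ_of_le (Finset.le_sup (f := id) hj)
    have h1 : ∑ j ∈ s, ∑ k ∈ B j, |(w : ℕ → ℝ) k| ^ pr ≤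
        ∑ j ∈ Finset.range (s.sup id + 1), ∑ k ∈ B j, |(w : ℕ → ℝ) k| ^ pr :=
      Finset.sum_le_sum_of_subset_of_nonneg hsub
        (fun j _ _ => Finset.sum_nonneg fun k _ => by positivity)
    have h2 : ∀ M', ∑ j ∈ Finset.range M', ∑ k ∈ B j, |(w : ℕ → ℝ) k| ^ pr
        = ∑ k ∈ Finset.Ico (N 0) (N M'), |(w : ℕ → ℝ) k| ^ pr := by
      intro M'
      induction M' with
      | zero => simp
      | succ M' ih =>
        rw [Finset.sum_range_succ, ih]
        exact Finset.sum_Ico_consecutive _ (hN.monotone (Nat.zero_le M'))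
          (hN.monotone (Nat.le_succ M'))
    have h3 : ∑ k ∈ Finset.Ico (N 0) (N (s.sup id + 1)), |(w : ℕ → ℝ) k| ^ pr ≤
        ∑' k, |(w : ℕ → ℝ) k| ^ pr :=
      Summable.sum_le_tsum _ (fun k _ => by positivity) hsumm
    rw [h2] at h1
    rw [← htsum]
    exact h1.trans h3
  have hperj : ∀ (w : lp (fun _ : ℕ => ℝ) p) (j : ℕ),
      |bs j w| ^ pr ≤ ∑ k ∈ B j, |(w : ℕ → ℝ) k| ^ pr := by
    intro w j
    have hsnn : (0:ℝ) ≤ ∑ k ∈ B j, |(w : ℕ → ℝ) k| ^ pr :=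
      Finset.sum_nonneg fun k _ => by positivity
    have h1 : |bs j w| ≤ (∑ k ∈ B j, |(w : ℕ → ℝ) k| ^ pr) ^ (1/pr) := by
      rw [hbsdef]
      simp only [abs_div]
      rw [abs_of_nonneg (le_of_lt (hTβpos j))]
      rw [div_le_iff₀ (hTβpos j)]
      calc |∑ k ∈ B j, t j k * (w : ℕ → ℝ) k|
          ≤ T j ^ β * (∑ k ∈ B j, |(w : ℕ → ℝ) k| ^ pr) ^ (1/pr) := hnum j w
        _ = (∑ k ∈ B j, |(w : ℕ → ℝ) k| ^ pr) ^ (1/pr) * T j ^ β := mul_comm _ _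
    calc |bs j w| ^ pr
        ≤ ((∑ k ∈ B j, |(w : ℕ → ℝ) k| ^ pr) ^ (1/pr)) ^ pr :=
          Real.rpow_le_rpow (abs_nonneg _) h1 hpr0.le
      _ = ∑ k ∈ B j, |(w : ℕ → ℝ) k| ^ pr := by
          rw [← Real.rpow_mul hsnn, one_div, inv_mul_cancel₀ hpr0.ne', Real.rpow_one]
  refine ⟨ψ, bs, hψ, ?_, ?_, ?_, ?_, ?_⟩
  -- additivity
  · intro j w w'
    rw [hbsdef]
    simp only
    rw [← add_div]
    congr 1
    rw [← Finset.sum_add_distrib]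
    apply Finset.sum_congr rfl
    intro k _
    have : ((w + w' : lp (fun _ : ℕ => ℝ) p) : ℕ → ℝ) k
        = (w : ℕ → ℝ) k + (w' : ℕ → ℝ) k := by
      rw [lp.coeFn_add]; rfl
    rw [this, mul_add]
  -- smul
  · intro j c w
    rw [hbsdef]
    simp only
    rw [← mul_div_assoc, Finset.mul_sum]
    congr 1
    apply Finset.sum_congr rfl
    intro k _
    have : ((c • w : lp (fun _ : ℕ => ℝ) p) : ℕ → ℝ) k = c * (w : ℕ → ℝ) k := by
      rw [lp.coeFn_smul]; rfl
    rw [this]; ring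
  -- diagonal value
  · intro j
    have hval : bs j (ξ' j) = T j ^ (1 / pr) := by
      rw [hbsdef]
      simp only
      have hnum_eq : ∑ k ∈ B j, t j k * (ξ' j : ℕ → ℝ) k = T j := by
        rw [hTdef]
        apply Finset.sum_congr rfl
        intro k _
        rw [htdef]
        simp only
        rw [mul_assoc, aux_sign_mul_self]
        have h := Real.rpow_add' (abs_nonneg ((ξ' j : ℕ → ℝ) k))
          (y := pr - 1) (z := 1) (by simp [hpr0.ne'])
        rw [Real.rpow_one] at h
        rw [← h]
        congr 1
        ring
      rw [hnum_eq]
      have hd : T j / T j ^ β = T j ^ ((1:ℝ) - β) := by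
        rw [Real.rpow_sub (hTpos j), Real.rpow_one]
      rw [hd]
      congr 1
      rw [hβdef]
      field_simp
      ring
    rw [hξ'def] at hval
    rw [hval]
    exact Real.rpow_le_rpow (by positivity) (hTlb j) (by positivity)
  -- global bound
  · intro w s
    refine (Finset.sum_le_sum (fun j _ => hperj w j)).trans (hblocks w s)
  -- off-diagonal bound
  · intro i s his
    have h1 : ∑ j ∈ s, |bs j (ξ (ψ i))| ^ pr ≤
        ∑ j ∈ s, ∑ k ∈ B j, |(ξ' i : ℕ → ℝ) k| ^ pr :=
      Finset.sum_le_sum (fun j _ => hperj (ξ' i) j)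
    have h2 := hblocks (ξ' i) (insert i s)
    rw [Finset.sum_insert his] at h2
    have h3 : ‖ξ' i‖ ^ pr - ε ≤ T i := by
      have := hblock i
      simp only [hTdef, hBdef, hξ'def]
      convert this using 2
    have h4 : ∑ k ∈ B i, |(ξ' i : ℕ → ℝ) k| ^ pr = T i := rfl
    rw [h4] at h2
    linarith


/-- Construction of the bilinear form out of block functionals. -/
lemma aux_bform {X Y : Type*} [NormedAddCommGroup X] [NormedSpace ℝ X]
    [NormedAddCommGroup Y] [NormedSpace ℝ Y]
    (p q : ℝ≥0∞) [Fact (1 ≤ p)] [Fact (1 ≤ q)]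
    (hpr : 1 < p.toReal) (hqr : 1 < q.toReal)
    (hpq : 1 ≤ 1/p.toReal + 1/q.toReal)
    (u : X →L[ℝ] lp (fun _ : ℕ => ℝ) p) (v : Y →L[ℝ] lp (fun _ : ℕ => ℝ) q)
    (bs : ℕ → lp (fun _ : ℕ => ℝ) p → ℝ) (cs : ℕ → lp (fun _ : ℕ => ℝ) q → ℝ)
    (sg : ℕ → ℝ) (hsg : ∀ j, |sg j| ≤ 1)
    (hba : ∀ j w w', bs j (w + w') = bs j w + bs j w')
    (hbsm : ∀ j (c : ℝ) w, bs j (c • w) = c * bs j w)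
    (hca : ∀ j w w', cs j (w + w') = cs j w + cs j w')
    (hcsm : ∀ j (c : ℝ) w, cs j (c • w) = c * cs j w)
    (hb : ∀ (w : lp (fun _ : ℕ => ℝ) p) (s : Finset ℕ),
      ∑ j ∈ s, |bs j w| ^ p.toReal ≤ ‖w‖ ^ p.toReal)
    (hc : ∀ (w : lp (fun _ : ℕ => ℝ) q) (s : Finset ℕ),
      ∑ j ∈ s, |cs j w| ^ q.toReal ≤ ‖w‖ ^ q.toReal) :
    ∃ B : X →L[ℝ] Y →L[ℝ] ℝ,
      (∀ x y, B x y = ∑' j, sg j * bs j (u x) * cs j (v y)) ∧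
      (∀ x y, Summable (fun j => |bs j (u x)| * |cs j (v y)|)) := by
  have hpr0 : 0 < p.toReal := by linarith
  have hqr0 : 0 < q.toReal := by linarith
  -- partial-sum bound
  have hpartial : ∀ (w : lp (fun _ : ℕ => ℝ) p) (w' : lp (fun _ : ℕ => ℝ) q)
      (s : Finset ℕ), ∑ j ∈ s, |bs j w| * |cs j w'| ≤ ‖w‖ * ‖w'‖ := by
    intro w w' s
    have h := aux_holder_bound hpr hqr hpq (fun j => bs j w) (fun j => cs j w') s
      (A := ‖w‖ ^ p.toReal) (B := ‖w'‖ ^ q.toReal) (by positivity) (by positivity)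
      (hb w s) (hc w' s)
    have e1 : (‖w‖ ^ p.toReal) ^ (1/p.toReal) = ‖w‖ := by
      rw [← Real.rpow_mul (norm_nonneg _), mul_one_div, div_self hpr0.ne', Real.rpow_one]
    have e2 : (‖w'‖ ^ q.toReal) ^ (1/q.toReal) = ‖w'‖ := by
      rw [← Real.rpow_mul (norm_nonneg _), mul_one_div, div_self hqr0.ne', Real.rpow_one]
    rwa [e1, e2] at h
  have hsabs : ∀ (w : lp (fun _ : ℕ => ℝ) p) (w' : lp (fun _ : ℕ => ℝ) q),
      Summable (fun j => |bs j w| * |cs j w'|) := by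
    intro w w'
    exact summable_of_sum_range_le (fun j => by positivity)
      (fun n => hpartial w w' (Finset.range n))
  have hsterm : ∀ (x : X) (y : Y),
      Summable (fun j => sg j * bs j (u x) * cs j (v y)) := by
    intro x y
    apply Summable.of_abs
    refine (hsabs (u x) (v y)).of_nonneg_of_le (fun j => abs_nonneg _) (fun j => ?_)
    rw [abs_mul, abs_mul]
    have h1 : |sg j| * |bs j (u x)| ≤ |bs j (u x)| := by
      have := mul_le_of_le_one_left (abs_nonneg (bs j (u x))) (hsg j)
      linarith [this]
    exact mul_le_mul_of_nonneg_right h1 (abs_nonneg _)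
  -- the bilinear map
  have hadd1 : ∀ (x x' : X) (y : Y),
      ∑' j, sg j * bs j (u (x + x')) * cs j (v y)
        = (∑' j, sg j * bs j (u x) * cs j (v y))
          + ∑' j, sg j * bs j (u x') * cs j (v y) := by
    intro x x' y
    rw [← Summable.tsum_add (hsterm x y) (hsterm x' y)]
    apply tsum_congr
    intro j
    rw [map_add, hba]
    ring
  have hsm1 : ∀ (c : ℝ) (x : X) (y : Y),
      ∑' j, sg j * bs j (u (c • x)) * cs j (v y)
        = c * ∑' j, sg j * bs j (u x) * cs j (v y) := by
    intro c x y
    rw [← tsum_mul_left]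
    apply tsum_congr
    intro j
    rw [map_smul, hbsm]
    ring
  have hadd2 : ∀ (x : X) (y y' : Y),
      ∑' j, sg j * bs j (u x) * cs j (v (y + y'))
        = (∑' j, sg j * bs j (u x) * cs j (v y))
          + ∑' j, sg j * bs j (u x) * cs j (v y') := by
    intro x y y'
    rw [← Summable.tsum_add (hsterm x y) (hsterm x y')]
    apply tsum_congr
    intro j
    rw [map_add, hca]
    ring
  have hsm2 : ∀ (c : ℝ) (x : X) (y : Y),
      ∑' j, sg j * bs j (u x) * cs j (v (c • y))
        = c * ∑' j, sg j * bs j (u x) * cs j (v y) := by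
    intro c x y
    rw [← tsum_mul_left]
    apply tsum_congr
    intro j
    rw [map_smul, hcsm]
    ring
  have hbound : ∀ (x : X) (y : Y),
      ‖∑' j, sg j * bs j (u x) * cs j (v y)‖ ≤ (‖u‖ * ‖v‖) * ‖x‖ * ‖y‖ := by
    intro x y
    have h0 : Summable (fun j => ‖sg j * bs j (u x) * cs j (v y)‖) := by
      refine (hsabs (u x) (v y)).of_nonneg_of_le (fun j => norm_nonneg _) (fun j => ?_)
      rw [Real.norm_eq_abs, abs_mul, abs_mul]
      have h1 : |sg j| * |bs j (u x)| ≤ |bs j (u x)| := by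
        have := mul_le_of_le_one_left (abs_nonneg (bs j (u x))) (hsg j)
        linarith [this]
      exact mul_le_mul_of_nonneg_right h1 (abs_nonneg _)
    refine (norm_tsum_le_tsum_norm h0).trans ?_
    have h1 : ∑' j, ‖sg j * bs j (u x) * cs j (v y)‖ ≤ ∑' j, |bs j (u x)| * |cs j (v y)| := by
      refine Summable.tsum_le_tsum (fun j => ?_) h0 (hsabs (u x) (v y))
      rw [Real.norm_eq_abs, abs_mul, abs_mul]
      have h1 : |sg j| * |bs j (u x)| ≤ |bs j (u x)| := by
        have := mul_le_of_le_one_left (abs_nonneg (bs j (u x))) (hsg j)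
        linarith [this]
      exact mul_le_mul_of_nonneg_right h1 (abs_nonneg _)
    have h2 : ∑' j, |bs j (u x)| * |cs j (v y)| ≤ ‖u x‖ * ‖v y‖ :=
      Summable.tsum_le_of_sum_le (hsabs (u x) (v y)) (fun s => hpartial (u x) (v y) s)
    have h3 : ‖u x‖ * ‖v y‖ ≤ (‖u‖ * ‖v‖) * ‖x‖ * ‖y‖ := by
      have hu := u.le_opNorm x
      have hv := v.le_opNorm y
      have := mul_le_mul hu hv (norm_nonneg _) (by positivity)
      calc ‖u x‖ * ‖v y‖ ≤ (‖u‖ * ‖x‖) * (‖v‖ * ‖y‖) := this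
        _ = (‖u‖ * ‖v‖) * ‖x‖ * ‖y‖ := by ring
    linarith
  refine ⟨LinearMap.mkContinuous₂
    (LinearMap.mk₂ ℝ (fun x y => ∑' j, sg j * bs j (u x) * cs j (v y))
      (fun x x' y => hadd1 x x' y) (fun c x y => hsm1 c x y)
      (fun x y y' => hadd2 x y y') (fun c x y => hsm2 c x y))
    (‖u‖ * ‖v‖) (fun x y => hbound x y), fun x y => rfl, fun x y => hsabs (u x) (v y)⟩


-- small helpers
lemma aux_wc_comp {X : Type*} [SeminormedAddCommGroup X] [NormedSpace ℝ X]
    {x : ℕ → X} (hx : WeaklyCauchySeq x) {φ : ℕ → ℕ}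
    (hφ : Tendsto φ atTop atTop) : WeaklyCauchySeq (fun n => x (φ n)) :=
  fun f => (hx f).imp fun _ hl => hl.comp hφ

lemma aux_wn_comp {X : Type*} [SeminormedAddCommGroup X] [NormedSpace ℝ X]
    {x : ℕ → X} (hx : WeaklyNullSeq x) {φ : ℕ → ℕ}
    (hφ : Tendsto φ atTop atTop) : WeaklyNullSeq (fun n => x (φ n)) :=
  fun f => (hx f).comp hφ

/-- Processing of one side: produces the operator and a difference sequence whose image
is seminormalized with coordinates tending to zero. -/
lemma aux_one_side {X : Type*} [NormedAddCommGroup X] [NormedSpace ℝ X] [CompleteSpace X]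
    (p : ℝ≥0∞) [Fact (1 ≤ p)] (hp1 : 1 < p.toReal)
    (hX : PropR p X) {W1 : Set X} (hW1 : ¬ RelNormCompact X W1)
    (tr : ∀ x : ℕ → X, (∀ n, x n ∈ W1) →
      ∃ φ, StrictMono φ ∧ WeaklyCauchySeq (fun n => x (φ n))) :
    ∃ (u : X →L[ℝ] lp (fun _ : ℕ => ℝ) p) (z1 a b : ℕ → X) (δ C : ℝ),
      0 < δ ∧ 0 < C ∧
      (∀ n, a n ∈ W1) ∧ (∀ n, b n ∈ W1) ∧
      (∀ n, z1 n = a n - b n) ∧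
      (∀ k : ℕ, Tendsto (fun n => ((u (z1 n)) : ℕ → ℝ) k) atTop (𝓝 0)) ∧
      (∀ n, δ ≤ ‖u (z1 n)‖) ∧ (∀ n, ‖u (z1 n)‖ ≤ C) := by
  obtain ⟨ε1, hε1, xs, hxsW, hxsep⟩ := aux_exists_sep_seq hW1
  obtain ⟨φ1, hφ1, hwc1⟩ := tr xs hxsW
  obtain ⟨C1, hC1⟩ := aux_weaklyCauchy_bounded _ hwc1
  have hodd : Tendsto (fun n : ℕ => 2*n+1) atTop atTop :=
    StrictMono.tendsto_atTop (fun a b hab => by omega)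
  have heven : Tendsto (fun n : ℕ => 2*n) atTop atTop :=
    StrictMono.tendsto_atTop (fun a b hab => by omega)
  set z : ℕ → X := fun n => xs (φ1 (2*n+1)) - xs (φ1 (2*n)) with hzdef
  have hznull : WeaklyNullSeq z := by
    intro f
    obtain ⟨l, hl⟩ := hwc1 f
    have h1 : Tendsto (fun n => f (xs (φ1 (2*n+1)))) atTop (𝓝 l) := hl.comp hodd
    have h2 : Tendsto (fun n => f (xs (φ1 (2*n)))) atTop (𝓝 l) := hl.comp heven
    have h3 := h1.sub h2
    rw [sub_self] at h3
    refine h3.congr (fun n => ?_)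
    rw [hzdef]
    simp [map_sub]
  have hzlb : ∀ n, ε1 ≤ ‖z n‖ := by
    intro n
    have hne : φ1 (2*n+1) ≠ φ1 (2*n) := hφ1.injective.ne (by omega)
    have := hxsep _ _ hne
    rwa [dist_eq_norm] at this
  have hzub : ∀ n, ‖z n‖ ≤ 2*C1 := by
    intro n
    rw [hzdef]
    refine (norm_sub_le _ _).trans ?_
    have e1 := hC1 (2*n+1)
    have e2 := hC1 (2*n)
    linarith
  obtain ⟨u, hu⟩ := hX _ (aux_relWeakCompact_range hznull)
    (aux_not_relNormCompact_range hznull hε1 hzlb)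
  obtain ⟨δ1, hδ1, g, hgmem, hgsep⟩ := aux_exists_sep_seq hu
  have hidx : ∀ n, ∃ k, u (z k) = g n := by
    intro n
    obtain ⟨w, hwmem, hw⟩ := hgmem n
    obtain ⟨k, hk⟩ := hwmem
    exact ⟨k, by rw [hk]; exact hw⟩
  choose idx hidxeq using hidx
  have hidxinj : Function.Injective idx := by
    intro a b hab
    by_contra hne
    have h1 := hgsep a b hne
    have h2 : g a = g b := by rw [← hidxeq a, ← hidxeq b, hab]
    rw [h2, dist_self] at h1
    linarith
  obtain ⟨σ0, hσ0, hmono0⟩ := aux_exists_strictMono_comp hidxinj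
  have hξ0sep : ∀ a b, a ≠ b → δ1 ≤ dist (g (σ0 a)) (g (σ0 b)) :=
    fun a b hab => hgsep _ _ (hσ0.injective.ne hab)
  have hshift : ∃ n0 : ℕ, ∀ n, δ1/2 ≤ ‖g (σ0 (n + n0))‖ := by
    by_cases hbad : ∃ b, ‖g (σ0 b)‖ < δ1/2
    · obtain ⟨b, hb⟩ := hbad
      refine ⟨b+1, fun n => ?_⟩
      by_contra hlt
      push_neg at hlt
      have hne : n + (b+1) ≠ b := by omega
      have hsep := hξ0sep _ _ hne
      have hd : dist (g (σ0 (n+(b+1)))) (g (σ0 b)) ≤ ‖g (σ0 (n+(b+1)))‖ + ‖g (σ0 b)‖ := by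
        rw [dist_eq_norm]; exact norm_sub_le _ _
      linarith
    · push_neg at hbad
      exact ⟨0, fun n => hbad (n+0)⟩
  obtain ⟨n0, hn0⟩ := hshift
  set K : ℕ → ℕ := fun n => idx (σ0 (n + n0)) with hKdef
  have hKmono : StrictMono K := by
    intro a b hab
    exact hmono0 (by omega)
  set z1 : ℕ → X := fun n => z (K n) with hz1def
  have huz1 : ∀ n, u (z1 n) = g (σ0 (n + n0)) := fun n => hidxeq _
  have hz1null : WeaklyNullSeq z1 := aux_wn_comp hznull hKmono.tendsto_atTop
  refine ⟨u, z1, fun n => xs (φ1 (2*(K n)+1)), fun n => xs (φ1 (2*(K n))),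
    δ1/2, ‖u‖ * (2*C1) + 1, by linarith, ?_, fun n => hxsW _, fun n => hxsW _,
    fun n => rfl, ?_, ?_, ?_⟩
  · -- 0 < C
    have h0 : 0 < ε1 := hε1
    have h1 : ε1 ≤ ‖z 0‖ := hzlb 0
    have h2 : ‖z 0‖ ≤ 2*C1 := hzub 0
    have h3 : (0:ℝ) ≤ ‖u‖ := norm_nonneg _
    nlinarith [mul_nonneg h3 (le_trans h0.le (h1.trans h2))]
  · -- coordinates tend to zero
    intro k
    have := hz1null ((lpCoord p k).comp u)
    refine this.congr (fun n => ?_)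
    simp
  · -- lower bound
    intro n
    rw [huz1 n]
    exact hn0 n
  · -- upper bound
    intro n
    have h1 : ‖u (z1 n)‖ ≤ ‖u‖ * ‖z1 n‖ := u.le_opNorm _
    have h2 : ‖z1 n‖ ≤ 2*C1 := hzub _
    have h3 : ‖u‖ * ‖z1 n‖ ≤ ‖u‖ * (2*C1) :=
      mul_le_mul_of_nonneg_left h2 (norm_nonneg _)
    linarith

theorem stmt14 (p q : ℝ≥0∞) [Fact (1 ≤ p)] [Fact (1 ≤ q)]
    (hp : 1 < p) (hp' : p ≠ ⊤) (hq : 1 < q) (hq' : q ≠ ⊤) (hpq : 1 ≤ 1 / p + 1 / q)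
    {X Y Z : Type*} [NormedAddCommGroup X] [NormedSpace ℝ X] [CompleteSpace X] [NormedAddCommGroup Y] [NormedSpace ℝ Y] [CompleteSpace Y] [NormedAddCommGroup Z] [NormedSpace ℝ Z] [CompleteSpace Z]
    (hX : PropR p X) (hY : PropR q Y)
    (m : X →L[ℝ] Y →L[ℝ] Z) (hm : IsProjTensorProduct X Y Z m)
    (W1 : Set X) (W2 : Set Y)
    (h : WeaklyPrecompact (Set.image2 (fun x y => m x y) W1 W2)) :
    RelNormCompact X W1 ∨ RelNormCompact Y W2 := by
  classical
  by_contra hcon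
  push_neg at hcon
  obtain ⟨hW1, hW2⟩ := hcon
  -- real exponents
  have hpr : 1 < p.toReal := by
    rw [← ENNReal.toReal_one]
    exact ENNReal.toReal_strict_mono hp' hp
  have hqr : 1 < q.toReal := by
    rw [← ENNReal.toReal_one]
    exact ENNReal.toReal_strict_mono hq' hq
  have hpr0 : 0 < p.toReal := by linarith
  have hqr0 : 0 < q.toReal := by linarith
  have hpne : p ≠ 0 := by
    intro h0; rw [h0] at hp; exact absurd hp (by simp)
  have hqne : q ≠ 0 := by
    intro h0; rw [h0] at hq; exact absurd hq (by simp)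
  have hpq' : 1 ≤ 1/p.toReal + 1/q.toReal := by
    have hpinv : (1/p : ℝ≥0∞) ≠ ⊤ := by
      rw [one_div]; exact ENNReal.inv_ne_top.mpr hpne
    have hqinv : (1/q : ℝ≥0∞) ≠ ⊤ := by
      rw [one_div]; exact ENNReal.inv_ne_top.mpr hqne
    have h2 : ((1:ℝ≥0∞)).toReal ≤ ((1/p + 1/q : ℝ≥0∞)).toReal :=
      (ENNReal.toReal_le_toReal (by simp) (by
        rw [ENNReal.add_ne_top]; exact ⟨hpinv, hqinv⟩)).mpr hpq
    rw [ENNReal.toReal_one, ENNReal.toReal_add hpinv hqinv] at h2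
    rw [one_div, one_div] at h2
    rw [one_div, one_div]
    rwa [ENNReal.toReal_inv, ENNReal.toReal_inv] at h2
  -- nonzero elements
  have hy₀ : ∃ y₀ ∈ W2, y₀ ≠ (0:Y) := by
    by_contra hy
    push_neg at hy
    apply hW2
    show IsCompact (closure W2)
    have hsub : W2 ⊆ ({0} : Set Y) := fun y hyW => hy y hyW
    exact (isCompact_singleton (x := (0:Y))).of_isClosed_subset isClosed_closure
      (closure_minimal hsub isClosed_singleton)
  obtain ⟨y₀, hy₀W, hy₀0⟩ := hy₀
  have hx₀ : ∃ x₀ ∈ W1, x₀ ≠ (0:X) := by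
    by_contra hx
    push_neg at hx
    apply hW1
    show IsCompact (closure W1)
    have hsub : W1 ⊆ ({0} : Set X) := fun x hxW => hx x hxW
    exact (isCompact_singleton (x := (0:X))).of_isClosed_subset isClosed_closure
      (closure_minimal hsub isClosed_singleton)
  obtain ⟨x₀, hx₀W, hx₀0⟩ := hx₀
  -- weak precompactness transferred to W1 and W2
  have trX : ∀ x : ℕ → X, (∀ n, x n ∈ W1) →
      ∃ φ, StrictMono φ ∧ WeaklyCauchySeq (fun n => x (φ n)) := by
    intro x hxW
    obtain ⟨φ, hφ, hwc⟩ := h (fun n => m (x n) y₀)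
      (fun n => Set.mem_image2_of_mem (hxW n) hy₀W)
    refine ⟨φ, hφ, ?_⟩
    intro f
    obtain ⟨g, hg1, hg2⟩ := exists_dual_vector ℝ y₀ (norm_ne_zero_iff.mpr hy₀0)
    have hg2' : g y₀ = ‖y₀‖ := by exact_mod_cast hg2
    have hy₀n : ‖y₀‖ ≠ 0 := norm_ne_zero_iff.mpr hy₀0
    obtain ⟨T, -, hT⟩ := hm.lift ℝ (f.smulRight (‖y₀‖⁻¹ • g))
    obtain ⟨l, hl⟩ := hwc T
    refine ⟨l, ?_⟩
    refine hl.congr (fun n => ?_)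
    show T (m (x (φ n)) y₀) = f (x (φ n))
    rw [hT]
    simp [hg2', ContinuousLinearMap.smulRight_apply]
    field_simp
  have trY : ∀ y : ℕ → Y, (∀ n, y n ∈ W2) →
      ∃ φ, StrictMono φ ∧ WeaklyCauchySeq (fun n => y (φ n)) := by
    intro y hyW
    obtain ⟨φ, hφ, hwc⟩ := h (fun n => m x₀ (y n))
      (fun n => Set.mem_image2_of_mem hx₀W (hyW n))
    refine ⟨φ, hφ, ?_⟩
    intro f
    obtain ⟨g, hg1, hg2⟩ := exists_dual_vector ℝ x₀ (norm_ne_zero_iff.mpr hx₀0)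
    have hg2' : g x₀ = ‖x₀‖ := by exact_mod_cast hg2
    have hx₀n : ‖x₀‖ ≠ 0 := norm_ne_zero_iff.mpr hx₀0
    obtain ⟨T, -, hT⟩ := hm.lift ℝ ((‖x₀‖⁻¹ • g).smulRight f)
    obtain ⟨l, hl⟩ := hwc T
    refine ⟨l, ?_⟩
    refine hl.congr (fun n => ?_)
    show T (m x₀ (y (φ n))) = f (y (φ n))
    rw [hT]
    simp [hg2', ContinuousLinearMap.smulRight_apply]
    field_simp
  -- process both sides
  obtain ⟨u, z1, a1, b1, δu, Cu, hδu, hCu, ha1W, hb1W, hz1ab, hcoordu, hluz, huz⟩ :=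
    aux_one_side p hpr hX hW1 trX
  obtain ⟨v, w1, c1, d1, δv, Cv, hδv, hCv, hc1W, hd1W, hw1cd, hcoordv, hlvz, hvz⟩ :=
    aux_one_side q hqr hY hW2 trY
  -- constants
  set du0 : ℝ := (δu ^ p.toReal / 2) ^ (1 / p.toReal) with hdu0def
  set dv0 : ℝ := (δv ^ q.toReal / 2) ^ (1 / q.toReal) with hdv0def
  have hdu0 : 0 < du0 := Real.rpow_pos_of_pos (by positivity) _
  have hdv0 : 0 < dv0 := Real.rpow_pos_of_pos (by positivity) _
  set ρ : ℝ := du0 * dv0 with hρdef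
  have hρ : 0 < ρ := mul_pos hdu0 hdv0
  set εu : ℝ := min (δu ^ p.toReal / 2) ((ρ/(8*Cv)) ^ p.toReal) with hεudef
  have hεu0 : 0 < εu := lt_min (by positivity) (Real.rpow_pos_of_pos (by positivity) _)
  have hεu1 : εu ≤ δu ^ p.toReal / 2 := min_le_left _ _
  have hεukey : εu ^ (1/p.toReal) * Cv ≤ ρ/8 := by
    have h1 : εu ^ (1/p.toReal) ≤ ((ρ/(8*Cv)) ^ p.toReal) ^ (1/p.toReal) :=
      Real.rpow_le_rpow hεu0.le (min_le_right _ _) (by positivity)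
    rw [← Real.rpow_mul (by positivity), mul_one_div, div_self hpr0.ne',
      Real.rpow_one] at h1
    calc εu ^ (1/p.toReal) * Cv ≤ (ρ/(8*Cv)) * Cv :=
          mul_le_mul_of_nonneg_right h1 hCv.le
      _ = ρ/8 := by field_simp
  -- side packages
  obtain ⟨ψu, bsu, hψu, hbadd, hbsm, hbdiag, hbglob, hboff⟩ :=
    aux_side_package p hpr (fun n => u (z1 n)) hcoordu hδu hluz hεu0 hεu1
  obtain ⟨ψv, csv, hψv, hcadd, hcsm, hcdiag, hcglob, hcoff⟩ :=
    aux_side_package q hqr (fun n => v (w1 n)) hcoordv hδv hlvz (by positivity)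
      (le_refl _)
  -- the four elementary-tensor sequences and a common weakly Cauchy subsequence
  obtain ⟨τ1, hτ1, hA⟩ := h (fun j => m (a1 (ψu j)) (c1 (ψv j)))
    (fun j => Set.mem_image2_of_mem (ha1W _) (hc1W _))
  obtain ⟨τ2, hτ2, hB⟩ := h (fun i => m (a1 (ψu (τ1 i))) (d1 (ψv (τ1 i))))
    (fun j => Set.mem_image2_of_mem (ha1W _) (hd1W _))
  obtain ⟨τ3, hτ3, hC⟩ := h (fun i => m (b1 (ψu (τ1 (τ2 i)))) (c1 (ψv (τ1 (τ2 i)))))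
    (fun j => Set.mem_image2_of_mem (hb1W _) (hc1W _))
  obtain ⟨τ4, hτ4, hD⟩ := h (fun i => m (b1 (ψu (τ1 (τ2 (τ3 i))))) (d1 (ψv (τ1 (τ2 (τ3 i))))))
    (fun j => Set.mem_image2_of_mem (hb1W _) (hd1W _))
  set σ : ℕ → ℕ := fun i => τ1 (τ2 (τ3 (τ4 i))) with hσdef
  have hσmono : StrictMono σ := fun i i' hii => hτ1 (hτ2 (hτ3 (hτ4 hii)))
  have hA' : WeaklyCauchySeq (fun i => m (a1 (ψu (σ i))) (c1 (ψv (σ i)))) :=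
    aux_wc_comp hA ((hτ2.comp (hτ3.comp hτ4)).tendsto_atTop)
  have hB' : WeaklyCauchySeq (fun i => m (a1 (ψu (σ i))) (d1 (ψv (σ i)))) :=
    aux_wc_comp hB ((hτ3.comp hτ4).tendsto_atTop)
  have hC' : WeaklyCauchySeq (fun i => m (b1 (ψu (σ i))) (c1 (ψv (σ i)))) :=
    aux_wc_comp hC (hτ4.tendsto_atTop)
  have hD' : WeaklyCauchySeq (fun i => m (b1 (ψu (σ i))) (d1 (ψv (σ i)))) := hD
  -- signs
  set sg : ℕ → ℝ := fun j => if (∃ i, σ i = j ∧ Odd i) then (-1:ℝ) else 1 with hsgdef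
  have hsgabs : ∀ j, |sg j| ≤ 1 := by
    intro j
    rw [hsgdef]
    by_cases hcs : (∃ i, σ i = j ∧ Odd i) <;> simp [hcs]
  have hsgeven : ∀ i, Even i → sg (σ i) = 1 := by
    intro i hi
    rw [hsgdef]
    simp only
    rw [if_neg]
    rintro ⟨i', hi', hodd⟩
    rw [hσmono.injective hi'] at hodd
    exact (Nat.not_odd_iff_even.mpr hi) hodd
  have hsgodd : ∀ i, Odd i → sg (σ i) = -1 := by
    intro i hi
    rw [hsgdef]
    exact if_pos ⟨i, rfl, hi⟩
  -- the bilinear form and its lift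
  obtain ⟨B, hBapp, hBsumm⟩ := aux_bform p q hpr hqr hpq' u v bsu csv sg hsgabs
    hbadd hbsm hcadd hcsm hbglob hcglob
  obtain ⟨T, -, hT⟩ := hm.lift ℝ B
  -- limits along the subsequence
  obtain ⟨l1, hl1⟩ := hA' T
  obtain ⟨l2, hl2⟩ := hB' T
  obtain ⟨l3, hl3⟩ := hC' T
  obtain ⟨l4, hl4⟩ := hD' T
  have hLlim : Tendsto (fun i => T (m (z1 (ψu (σ i))) (w1 (ψv (σ i))))) atTop
      (𝓝 (l1 - l2 - l3 + l4)) := by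
    refine (((hl1.sub hl2).sub hl3).add hl4).congr (fun i => ?_)
    rw [hz1ab, hw1cd]
    simp only [map_sub, ContinuousLinearMap.sub_apply, ContinuousLinearMap.coe_sub',
      Pi.sub_apply]
    ring
  -- main estimate
  have hmain : ∀ j, |T (m (z1 (ψu j)) (w1 (ψv j))) -
      sg j * bsu j (u (z1 (ψu j))) * csv j (v (w1 (ψv j)))| ≤ ρ/8 := by
    intro j
    rw [hT, hBapp]
    have hdom : ∀ t, |sg t * bsu t (u (z1 (ψu j))) * csv t (v (w1 (ψv j)))| ≤
        |bsu t (u (z1 (ψu j)))| * |csv t (v (w1 (ψv j)))| := by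
      intro t
      rw [abs_mul, abs_mul]
      exact mul_le_mul_of_nonneg_right
        (mul_le_of_le_one_left (abs_nonneg _) (hsgabs t)) (abs_nonneg _)
    have hsumm : Summable (fun t => sg t * bsu t (u (z1 (ψu j))) * csv t (v (w1 (ψv j)))) := by
      apply Summable.of_abs
      exact (hBsumm _ _).of_nonneg_of_le (fun t => abs_nonneg _) hdom
    rw [Summable.tsum_eq_add_tsum_ite hsumm j]
    rw [add_sub_cancel_left]
    have hsummite : Summable (fun t => ‖if t = j then (0:ℝ) else
        sg t * bsu t (u (z1 (ψu j))) * csv t (v (w1 (ψv j)))‖) := by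
      refine (hBsumm (z1 (ψu j)) (w1 (ψv j))).of_nonneg_of_le (fun t => norm_nonneg _) (fun t => ?_)
      rw [Real.norm_eq_abs]
      split
      · simp only [abs_zero]
        positivity
      · exact hdom t
    rw [← Real.norm_eq_abs]
    refine (norm_tsum_le_tsum_norm hsummite).trans ?_
    refine Summable.tsum_le_of_sum_le hsummite ?_
    intro s
    have h1 : ∑ t ∈ s, ‖if t = j then (0:ℝ) else
        sg t * bsu t (u (z1 (ψu j))) * csv t (v (w1 (ψv j)))‖ =
        ∑ t ∈ s.erase j, ‖if t = j then (0:ℝ) else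
        sg t * bsu t (u (z1 (ψu j))) * csv t (v (w1 (ψv j)))‖ :=
      (Finset.sum_erase s (by simp)).symm
    rw [h1]
    have h2 : ∑ t ∈ s.erase j, ‖if t = j then (0:ℝ) else
        sg t * bsu t (u (z1 (ψu j))) * csv t (v (w1 (ψv j)))‖ ≤
        ∑ t ∈ s.erase j, |bsu t (u (z1 (ψu j)))| * |csv t (v (w1 (ψv j)))| := by
      refine Finset.sum_le_sum (fun t ht => ?_)
      rw [Real.norm_eq_abs, if_neg (Finset.ne_of_mem_erase ht)]
      exact hdom t
    refine h2.trans ?_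
    have h3 : ∑ t ∈ s.erase j, |bsu t (u (z1 (ψu j)))| * |csv t (v (w1 (ψv j)))| ≤
        εu ^ (1/p.toReal) * (Cv ^ q.toReal) ^ (1/q.toReal) := by
      refine aux_holder_bound hpr hqr hpq' _ _ _ hεu0.le (by positivity) ?_ ?_
      · exact hboff j (s.erase j) (Finset.notMem_erase j s)
      · refine (hcglob (v (w1 (ψv j))) _).trans ?_
        exact Real.rpow_le_rpow (norm_nonneg _) (hvz _) hqr0.le
    refine h3.trans ?_
    have h4 : (Cv ^ q.toReal) ^ (1/q.toReal) = Cv := by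
      rw [← Real.rpow_mul hCv.le, mul_one_div, div_self hqr0.ne', Real.rpow_one]
    rw [h4]
    exact hεukey
  -- diagonal lower bound
  have hdiag : ∀ j, ρ ≤ bsu j (u (z1 (ψu j))) * csv j (v (w1 (ψv j))) := by
    intro j
    have h2 := hbdiag j
    have h3 := hcdiag j
    rw [hρdef]
    exact mul_le_mul h2 h3 hdv0.le (le_trans hdu0.le h2)
  have heven' : ∀ i, Even i → (7/8)*ρ ≤ T (m (z1 (ψu (σ i))) (w1 (ψv (σ i)))) := by
    intro i hi
    have h1 := hmain (σ i)
    rw [hsgeven i hi, one_mul] at h1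
    have h5 := hdiag (σ i)
    have h6 := abs_le.mp h1
    linarith [h6.1]
  have hodd' : ∀ i, Odd i → T (m (z1 (ψu (σ i))) (w1 (ψv (σ i)))) ≤ -((7/8)*ρ) := by
    intro i hi
    have h1 := hmain (σ i)
    rw [hsgodd i hi] at h1
    have h7 : (-1) * bsu (σ i) (u (z1 (ψu (σ i)))) * csv (σ i) (v (w1 (ψv (σ i)))) =
        -(bsu (σ i) (u (z1 (ψu (σ i)))) * csv (σ i) (v (w1 (ψv (σ i))))) := by ring
    rw [h7] at h1
    have h5 := hdiag (σ i)
    have h8 := abs_le.mp h1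
    linarith [h8.2]
  have hev : Tendsto (fun i : ℕ => 2*i) atTop atTop :=
    StrictMono.tendsto_atTop (fun a b hab => by omega)
  have hov : Tendsto (fun i : ℕ => 2*i+1) atTop atTop :=
    StrictMono.tendsto_atTop (fun a b hab => by omega)
  have hlow : (7/8)*ρ ≤ l1 - l2 - l3 + l4 :=
    ge_of_tendsto' (hLlim.comp hev) (fun i => heven' (2*i) (even_two_mul i))
  have hhigh : l1 - l2 - l3 + l4 ≤ -((7/8)*ρ) :=
    le_of_tendsto' (hLlim.comp hov) (fun i => hodd' (2*i+1) (odd_two_mul_add_one i))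
  linarith
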